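/- Partial derivative of the mutual information functional: fix i ∈ {1,…,m} and a probability vector p ∈ ℝ^m, and for t in a neighborhood of 0 define F(t) = −∫_ℂ (q_p(y) + t h_i(y)) log( q_p(y) + t h_i(y) ) dμ(y) + t ∫_ℂ h_i(y) log h_i(y) dμ(y) + Σ_{j=1}^m p_j ∫_ℂ h_j(y) log h_j(y) dμ(y). Then F is differentiable at t = 0 with F'(0) = ∫_ℂ h_i(y) log( h_i(y) / q_p(y) ) dμ(y) − 1. -/

import Mathlib

open MeasureTheory

lemma aux_deriv_xlogx (μ : Measure ℂ) [SigmaFinite μ] (a qf g : ℂ → ℝ)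
    (hma : Measurable a) (hmq : Measurable qf)
    (ha0 : ∀ y, 0 ≤ a y) (hq_pos : ∀ᵐ y ∂μ, 0 < qf y)
    (ε : ℝ) (εpos : 0 < ε) (hg_int : Integrable g μ)
    (hg : ∀ t : ℝ, |t| < ε → ∀ᵐ y ∂μ,
      |a y * (1 + Real.log (qf y + t * a y))| ≤ g y)
    (hint_q : Integrable (fun y => qf y * Real.log (qf y)) μ) :
    Integrable (fun y => a y * (1 + Real.log (qf y))) μ ∧
    HasDerivAt (fun t : ℝ => ∫ y, (qf y + t * a y) * Real.log (qf y + t * a y) ∂μ)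
      (∫ y, a y * (1 + Real.log (qf y)) ∂μ) 0 := by
  -- rational version of the domination hypothesis
  have hratQ : ∀ᵐ y ∂μ, ∀ r : ℚ, |(r : ℝ)| < ε →
      |a y * (1 + Real.log (qf y + (r : ℝ) * a y))| ≤ g y := by
    rw [ae_all_iff]
    intro r
    by_cases hr : |(r : ℝ)| < ε
    · filter_upwards [hg r hr] with y hy _ using hy
    · filter_upwards with y hy
      exact absurd hy hr
  -- the Lipschitz estimate
  have h_lip : ∀ᵐ y ∂μ, LipschitzOnWith (Real.nnabs (g y))
      (fun t : ℝ => (qf y + t * a y) * Real.log (qf y + t * a y)) (Metric.ball (0 : ℝ) ε) := by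
    filter_upwards [hq_pos, hratQ] with y hy hr
    rcases eq_or_lt_of_le (ha0 y) with ha | ha
    · -- a y = 0 : the function is constant
      intro u _ v _
      simp only [← ha, mul_zero, add_zero, edist_self]
      exact zero_le
    · -- a y > 0
      have hg0 : 0 ≤ g y := by
        have h0 := hr 0 (by simpa using εpos)
        exact le_trans (abs_nonneg _) h0
      -- first: ε * a y ≤ qf y
      have qa : ε * a y ≤ qf y := by
        by_contra hlt
        push_neg at hlt
        set c := Real.exp (-(1 + g y / a y)) with hc
        have hcpos : 0 < c := Real.exp_pos _
        have hts : -(qf y) / a y < min ((c - qf y) / a y) ε := by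
          rw [lt_min_iff]
          refine ⟨by gcongr <;> linarith, ?_⟩
          calc -(qf y) / a y < 0 := div_neg_of_neg_of_pos (by linarith) ha
            _ < ε := εpos
        obtain ⟨r, hr1, hr2⟩ := exists_rat_btwn hts
        have hr2a : (r : ℝ) < (c - qf y) / a y := lt_of_lt_of_le hr2 (min_le_left _ _)
        have hr2b : (r : ℝ) < ε := lt_of_lt_of_le hr2 (min_le_right _ _)
        have hr1' : -(qf y) < (r : ℝ) * a y := (div_lt_iff₀ ha).1 hr1
        have hr2' : (r : ℝ) * a y < c - qf y := (lt_div_iff₀ ha).1 hr2a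
        have hrε : |(r : ℝ)| < ε := by
          rw [abs_lt]
          refine ⟨?_, hr2b⟩
          have hqε : qf y / a y < ε := (div_lt_iff₀ ha).2 (by linarith)
          have : -ε < -(qf y) / a y := by
            rw [neg_div]
            linarith
          linarith
        have hpos : 0 < qf y + (r : ℝ) * a y := by linarith
        have hlt2 : qf y + (r : ℝ) * a y < c := by linarith
        have hlog : Real.log (qf y + (r : ℝ) * a y) < -(1 + g y / a y) := by
          calc Real.log (qf y + (r : ℝ) * a y) < Real.log c := Real.log_lt_log hpos hlt2
            _ = -(1 + g y / a y) := Real.log_exp _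
        have haga : a y * (g y / a y) = g y := by
          field_simp
        have hmain : a y * (1 + Real.log (qf y + (r : ℝ) * a y)) < -(g y) := by
          have := mul_lt_mul_of_pos_left hlog ha
          nlinarith
        have hb := hr r hrε
        have hna := neg_abs_le (a y * (1 + Real.log (qf y + (r : ℝ) * a y)))
        linarith
      -- positivity on the whole ball
      have hpos : ∀ t : ℝ, |t| < ε → 0 < qf y + t * a y := by
        intro t ht
        rcases abs_lt.1 ht with ⟨ht1, _⟩
        nlinarith
      -- the bound holds for all real t in the ball
      have hbnd : ∀ t : ℝ, |t| < ε → |a y * (1 + Real.log (qf y + t * a y))| ≤ g y := by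
        intro t ht
        by_contra hgt
        push_neg at hgt
        have c1 : ContinuousAt (fun s : ℝ => qf y + s * a y) t := by fun_prop
        have c2 : ContinuousAt (fun s : ℝ => Real.log (qf y + s * a y)) t :=
          c1.log (ne_of_gt (hpos t ht))
        have c3 : ContinuousAt (fun s : ℝ => |a y * (1 + Real.log (qf y + s * a y))|) t :=
          (continuousAt_const.mul (continuousAt_const.add c2)).abs
        have hev : ∀ᶠ s in nhds t, g y < |a y * (1 + Real.log (qf y + s * a y))| :=
          ContinuousAt.eventually_lt continuousAt_const c3 hgt
        rw [Metric.eventually_nhds_iff] at hev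
        obtain ⟨δ, δpos, hδ⟩ := hev
        have hδ'pos : 0 < min δ (ε - |t|) := lt_min δpos (by linarith)
        obtain ⟨r, hra, hrb⟩ := exists_rat_btwn (show t < t + min δ (ε - |t|) by linarith)
        have hdist : dist (r : ℝ) t < δ := by
          rw [Real.dist_eq, abs_lt]
          constructor
          · linarith
          · have : (r : ℝ) - t < min δ (ε - |t|) := by linarith
            exact lt_of_lt_of_le this (min_le_left _ _)
        have hrε : |(r : ℝ)| < ε := by
          rw [abs_lt]
          have h1 : (r : ℝ) - t < ε - |t| := lt_of_lt_of_le (by linarith) (min_le_right _ _)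
          have h2 := abs_lt.1 ht
          constructor <;> [linarith [neg_abs_le t]; linarith [le_abs_self t]]
        exact absurd (hr r hrε) (not_le.2 (hδ hdist))
      -- Lipschitz from the derivative bound
      refine (convex_ball (0 : ℝ) ε).lipschitzOnWith_of_nnnorm_hasDerivWithin_le
        (f' := fun t => a y * (1 + Real.log (qf y + t * a y))) ?_ ?_
      · intro t htb
        have ht : |t| < ε := by simpa [Real.dist_eq] using htb
        have h1 : HasDerivAt (fun s : ℝ => qf y + s * a y) (1 * a y) t :=
          ((hasDerivAt_id t).mul_const (a y)).const_add (qf y)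
        have h2 := (Real.hasDerivAt_mul_log (ne_of_gt (hpos t ht))).comp t h1
        have h3 : a y * (1 + Real.log (qf y + t * a y)) =
            (Real.log (qf y + t * a y) + 1) * (1 * a y) := by ring
        show HasDerivWithinAt _ (a y * (1 + Real.log (qf y + t * a y))) (Metric.ball 0 ε) t
        rw [h3]
        exact h2.hasDerivWithinAt
      · intro t htb
        have ht : |t| < ε := by simpa [Real.dist_eq] using htb
        rw [← NNReal.coe_le_coe, coe_nnnorm, Real.norm_eq_abs, Real.coe_nnabs]
        exact (hbnd t ht).trans (le_abs_self _)
  -- pointwise derivative at 0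
  have h_diff : ∀ᵐ y ∂μ, HasDerivAt
      (fun t : ℝ => (qf y + t * a y) * Real.log (qf y + t * a y))
      (a y * (1 + Real.log (qf y))) 0 := by
    filter_upwards [hq_pos] with y hy
    have h1 : HasDerivAt (fun s : ℝ => qf y + s * a y) (1 * a y) 0 :=
      ((hasDerivAt_id 0).mul_const (a y)).const_add (qf y)
    have hne : qf y + 0 * a y ≠ 0 := by simpa using ne_of_gt hy
    have h2 := (Real.hasDerivAt_mul_log hne).comp 0 h1
    have h3 : a y * (1 + Real.log (qf y)) =
        (Real.log (qf y + 0 * a y) + 1) * (1 * a y) := by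
      simp only [zero_mul, add_zero]; ring
    rw [h3]
    exact h2
  -- measurability
  have hmeasF : ∀ t : ℝ, AEStronglyMeasurable
      (fun y => (qf y + t * a y) * Real.log (qf y + t * a y)) μ := by
    intro t
    exact ((hmq.add (hma.const_mul t)).mul (hmq.add (hma.const_mul t)).log).aestronglyMeasurable
  have hF'meas : AEStronglyMeasurable (fun y => a y * (1 + Real.log (qf y))) μ :=
    (hma.mul (measurable_const.add hmq.log)).aestronglyMeasurable
  have hF_int : Integrable (fun y => (qf y + (0:ℝ) * a y) * Real.log (qf y + (0:ℝ) * a y)) μ := by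
    simpa using hint_q
  exact hasDerivAt_integral_of_dominated_loc_of_lip (Metric.ball_mem_nhds 0 εpos)
    (Filter.Eventually.of_forall hmeasF) hF_int hF'meas h_lip hg_int h_diff

/-- Partial derivative of the mutual information functional: the function
`F(t) = −∫ (q_p + t h_i) log (q_p + t h_i) dμ + t ∫ h_i log h_i dμ + ∑ j, p j ∫ h_j log h_j dμ`
is differentiable at `t = 0` with `F'(0) = ∫ h_i log (h_i / q_p) dμ − 1`. -/
theorem mutual_information_partial_derivative
    (μ : Measure ℂ) [SigmaFinite μ] (m : ℕ) (h : Fin m → ℂ → ℝ)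
    (hmeas : ∀ i, Measurable (h i))
    (hnonneg : ∀ i y, 0 ≤ h i y)
    (hdens : ∀ i, ∫ y, h i y ∂μ = 1)
    (i : Fin m) (p : Fin m → ℝ)
    (hp0 : ∀ j, 0 ≤ p j) (hp1 : (∑ j, p j) = 1)
    (hq_pos : ∀ᵐ y ∂μ, 0 < ∑ j, p j * h j y)
    (hint_q : Integrable (fun y => (∑ j, p j * h j y) * Real.log (∑ j, p j * h j y)) μ)
    (hint_hh : Integrable (fun y => h i y * Real.log (h i y)) μ)
    (hint_hq : Integrable (fun y => h i y * Real.log (∑ j, p j * h j y)) μ)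
    (hdom : ∃ ε > (0 : ℝ), ∃ g : ℂ → ℝ, Integrable g μ ∧
      ∀ t : ℝ, |t| < ε → ∀ᵐ y ∂μ,
        |h i y * (1 + Real.log ((∑ j, p j * h j y) + t * h i y))| ≤ g y) :
    HasDerivAt
      (fun t : ℝ =>
        -∫ y, ((∑ j, p j * h j y) + t * h i y) *
            Real.log ((∑ j, p j * h j y) + t * h i y) ∂μ
          + t * ∫ y, h i y * Real.log (h i y) ∂μ
          + ∑ j, p j * ∫ y, h j y * Real.log (h j y) ∂μ)
      ((∫ y, h i y * Real.log (h i y / (∑ j, p j * h j y)) ∂μ) - 1) 0 := by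
  obtain ⟨ε, εpos, g, hg_int, hg⟩ := hdom
  have hq_meas : Measurable (fun y => ∑ j, p j * h j y) := by
    apply Finset.measurable_sum
    intro j _
    exact (hmeas j).const_mul (p j)
  have main := aux_deriv_xlogx μ (h i) (fun y => ∑ j, p j * h j y) g (hmeas i) hq_meas
    (hnonneg i) hq_pos ε εpos hg_int hg hint_q
  -- integrability of h i
  have h_int : Integrable (h i) μ := by
    by_contra hc
    have := hdens i
    rw [integral_undef hc] at this
    norm_num at this
  -- value of the derivative integral
  have hFval : ∫ y, h i y * (1 + Real.log (∑ j, p j * h j y)) ∂μ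
      = 1 + ∫ y, h i y * Real.log (∑ j, p j * h j y) ∂μ := by
    have heq : (fun y => h i y * (1 + Real.log (∑ j, p j * h j y)))
        = fun y => h i y + h i y * Real.log (∑ j, p j * h j y) := by
      funext y; ring
    rw [heq, integral_add h_int hint_hq, hdens i]
  -- the log-ratio identity
  have E : ∫ y, h i y * Real.log (h i y / (∑ j, p j * h j y)) ∂μ
      = (∫ y, h i y * Real.log (h i y) ∂μ)
        - ∫ y, h i y * Real.log (∑ j, p j * h j y) ∂μ := by
    rw [← integral_sub hint_hh hint_hq]
    apply integral_congr_ae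
    filter_upwards [hq_pos] with y hy
    rcases eq_or_lt_of_le (hnonneg i y) with h0 | h0
    · simp [← h0]
    · rw [Real.log_div (ne_of_gt h0) (ne_of_gt hy)]; ring
  have Hder : HasDerivAt
      (fun t : ℝ =>
        -∫ y, ((∑ j, p j * h j y) + t * h i y) *
            Real.log ((∑ j, p j * h j y) + t * h i y) ∂μ
          + t * ∫ y, h i y * Real.log (h i y) ∂μ
          + ∑ j, p j * ∫ y, h j y * Real.log (h j y) ∂μ)
      (-(1 + ∫ y, h i y * Real.log (∑ j, p j * h j y) ∂μ)
        + ∫ y, h i y * Real.log (h i y) ∂μ) 0 := by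
    have h1 := main.2.neg
    rw [hFval] at h1
    exact (h1.add (hasDerivAt_mul_const _)).add_const _
  convert Hder using 1
  rw [E]; ring
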